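/- For n ≥ 0, the number of Fishburn permutations of length n avoiding the classical patterns 321, 2143, and 4123 equals C(n,2) + 1. -/

import Mathlib

set_option maxHeartbeats 1000000

/-- A permutation `π` of `Fin n` contains the classical pattern `p` (given as a
function `Fin k → ℕ` listing the pattern's entries). -/
def Contains {n k : ℕ} (π : Equiv.Perm (Fin n)) (p : Fin k → ℕ) : Prop :=
  ∃ f : Fin k → Fin n, StrictMono f ∧ ∀ i j, p i < p j ↔ π (f i) < π (f j)

/-- Classical pattern avoidance. -/
def Avoids {n k : ℕ} (π : Equiv.Perm (Fin n)) (p : Fin k → ℕ) : Prop :=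
  ¬ Contains π p

/-- A permutation is Fishburn if there are no indices `i < j` with
`π i, π (i+1), π j` forming a 231 pattern and `π i = π j + 1`. -/
def IsFishburn {n : ℕ} (π : Equiv.Perm (Fin n)) : Prop :=
  ¬ ∃ (i j : ℕ) (hij : i + 1 < j) (hj : j < n),
      π ⟨i, by omega⟩ < π ⟨i + 1, by omega⟩ ∧
      π ⟨j, hj⟩ < π ⟨i, by omega⟩ ∧
      (π ⟨i, by omega⟩ : ℕ) = (π ⟨j, hj⟩ : ℕ) + 1

namespace FishburnAux

lemma fin3_mk2 (h : 2 < 3) : (⟨2, h⟩ : Fin 3) = 2 := rfl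
lemma fin4_mk2 (h : 2 < 4) : (⟨2, h⟩ : Fin 4) = 2 := rfl
lemma fin4_mk3 (h : 3 < 4) : (⟨3, h⟩ : Fin 4) = 3 := rfl

def fval (n a b i : ℕ) : ℕ :=
  if a < b ∧ b < n then
    if i = a + 1 then a
    else if i = a then min (a+2) b
    else if a + 2 ≤ i ∧ i ≤ b then (if i = b then a+1 else i+1)
    else i
  else i

lemma fval_spec (n a b i : ℕ) :
    (a < b ∧ b < n ∧
      ((i = a+1 ∧ fval n a b i = a) ∨
       (i = a ∧ fval n a b i = min (a+2) b) ∨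
       (a+2 ≤ i ∧ i < b ∧ fval n a b i = i+1) ∨
       (a+2 ≤ i ∧ i = b ∧ fval n a b i = a+1) ∨
       ((i < a ∨ b < i) ∧ fval n a b i = i))) ∨
    (¬(a < b ∧ b < n) ∧ fval n a b i = i) := by
  unfold fval; split_ifs <;> omega

lemma fval_lt {n a b i : ℕ} (h : i < n) : fval n a b i < n := by
  unfold fval; split_ifs <;> omega

lemma fval_inj {n a b i j : ℕ} (h : fval n a b i = fval n a b j) : i = j := by
  unfold fval at h; split_ifs at h <;> omega

noncomputable def sig (n a b : ℕ) : Equiv.Perm (Fin n) :=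
  Equiv.ofBijective (fun i => ⟨fval n a b i.1, fval_lt i.2⟩)
    (Finite.injective_iff_bijective.mp (fun i j h =>
      Fin.ext (fval_inj (congrArg Fin.val h))))

lemma sig_apply (n a b : ℕ) (i : Fin n) : (sig n a b i : ℕ) = fval n a b i.1 := rfl

/-! ### σ is in the set -/

lemma sig_fishburn (n a b : ℕ) : IsFishburn (sig n a b) := by
  rintro ⟨i, j, hij, hj, h1, h2, h3⟩
  rw [Fin.lt_def] at h1 h2
  simp only [sig_apply] at h1 h2 h3
  have si := fval_spec n a b i
  have si1 := fval_spec n a b (i+1)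
  have sj := fval_spec n a b j
  omega

lemma sig_av321 (n a b : ℕ) : Avoids (sig n a b) ![3,2,1] := by
  rintro ⟨f, hm, hiff⟩
  have h01 : f 0 < f 1 := hm (by decide)
  have h12 : f 1 < f 2 := hm (by decide)
  have e10 : sig n a b (f 1) < sig n a b (f 0) := (hiff 1 0).mp (by norm_num)
  have e21 : sig n a b (f 2) < sig n a b (f 1) := (hiff 2 1).mp (by decide)
  rw [Fin.lt_def] at h01 h12 e10 e21
  rw [sig_apply, sig_apply] at e10 e21
  have s0 := fval_spec n a b (f 0).1
  have s1 := fval_spec n a b (f 1).1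
  have s2 := fval_spec n a b (f 2).1
  have := (f 0).2; have := (f 1).2; have := (f 2).2
  omega

lemma sig_av2143 (n a b : ℕ) : Avoids (sig n a b) ![2,1,4,3] := by
  rintro ⟨f, hm, hiff⟩
  have h01 : f 0 < f 1 := hm (by decide)
  have h12 : f 1 < f 2 := hm (by decide)
  have h23 : f 2 < f 3 := hm (by decide)
  have e1 : sig n a b (f 1) < sig n a b (f 0) := (hiff 1 0).mp (by norm_num)
  have e2 : sig n a b (f 0) < sig n a b (f 3) := (hiff 0 3).mp (by decide)
  have e3 : sig n a b (f 3) < sig n a b (f 2) := (hiff 3 2).mp (by decide)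
  rw [Fin.lt_def] at h01 h12 h23 e1 e2 e3
  rw [sig_apply, sig_apply] at e1 e2 e3
  have s0 := fval_spec n a b (f 0).1
  have s1 := fval_spec n a b (f 1).1
  have s2 := fval_spec n a b (f 2).1
  have s3 := fval_spec n a b (f 3).1
  have := (f 0).2; have := (f 1).2; have := (f 2).2; have := (f 3).2
  omega

lemma sig_av4123 (n a b : ℕ) : Avoids (sig n a b) ![4,1,2,3] := by
  rintro ⟨f, hm, hiff⟩
  have h01 : f 0 < f 1 := hm (by decide)
  have h12 : f 1 < f 2 := hm (by decide)
  have h23 : f 2 < f 3 := hm (by decide)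
  have e1 : sig n a b (f 1) < sig n a b (f 2) := (hiff 1 2).mp (by decide)
  have e2 : sig n a b (f 2) < sig n a b (f 3) := (hiff 2 3).mp (by decide)
  have e3 : sig n a b (f 3) < sig n a b (f 0) := (hiff 3 0).mp (by decide)
  rw [Fin.lt_def] at h01 h12 h23 e1 e2 e3
  rw [sig_apply, sig_apply] at e1 e2 e3
  have s0 := fval_spec n a b (f 0).1
  have s1 := fval_spec n a b (f 1).1
  have s2 := fval_spec n a b (f 2).1
  have s3 := fval_spec n a b (f 3).1
  have := (f 0).2; have := (f 1).2; have := (f 2).2; have := (f 3).2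
  omega

/-! ### Pattern-containment constructors -/

lemma mk321 {n : ℕ} (π : Equiv.Perm (Fin n)) (i j k : Fin n) (hij : i < j) (hjk : j < k)
    (h1 : (π j : ℕ) < π i) (h2 : (π k : ℕ) < π j) : Contains π ![3,2,1] := by
  refine ⟨![i,j,k], ?_, ?_⟩
  · intro x y hxy
    have hxy' := Fin.lt_def.mp hxy
    have e1 := Fin.lt_def.mp hij
    have e2 := Fin.lt_def.mp hjk
    fin_cases x <;> fin_cases y <;>
      simp only [Fin.mk_zero, Fin.mk_one, fin3_mk2, Fin.lt_def, Matrix.cons_val_zero,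
        Matrix.cons_val_one, Matrix.head_cons, Matrix.cons_val_two, Matrix.tail_cons,
        Fin.isValue] at hxy' ⊢ <;> omega
  · intro x y
    fin_cases x <;> fin_cases y <;>
      simp only [Fin.mk_zero, Fin.mk_one, fin3_mk2, Fin.lt_def, Matrix.cons_val_zero,
        Matrix.cons_val_one, Matrix.head_cons, Matrix.cons_val_two, Matrix.tail_cons,
        Fin.isValue] <;> omega

lemma mk4mono {n : ℕ} (i j k l : Fin n) (hij : i < j) (hjk : j < k) (hkl : k < l) :
    StrictMono (![i,j,k,l] : Fin 4 → Fin n) := by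
  intro x y hxy
  have hxy' := Fin.lt_def.mp hxy
  have e1 := Fin.lt_def.mp hij
  have e2 := Fin.lt_def.mp hjk
  have e3 := Fin.lt_def.mp hkl
  fin_cases x <;> fin_cases y <;>
    simp only [Fin.mk_zero, Fin.mk_one, fin4_mk2, fin4_mk3, Fin.lt_def, Matrix.cons_val_zero,
      Matrix.cons_val_one, Matrix.head_cons, Matrix.cons_val_two, Matrix.tail_cons,
      Matrix.cons_val_three, Fin.isValue] at hxy' ⊢ <;> omega

lemma mk2143 {n : ℕ} (π : Equiv.Perm (Fin n)) (i j k l : Fin n)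
    (hij : i < j) (hjk : j < k) (hkl : k < l)
    (h1 : (π j : ℕ) < π i) (h2 : (π i : ℕ) < π l) (h3 : (π l : ℕ) < π k) :
    Contains π ![2,1,4,3] := by
  refine ⟨![i,j,k,l], mk4mono i j k l hij hjk hkl, ?_⟩
  intro x y
  fin_cases x <;> fin_cases y <;>
    simp only [Fin.mk_zero, Fin.mk_one, fin4_mk2, fin4_mk3, Fin.lt_def, Matrix.cons_val_zero,
      Matrix.cons_val_one, Matrix.head_cons, Matrix.cons_val_two, Matrix.tail_cons,
      Matrix.cons_val_three, Fin.isValue] <;> omega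

lemma mk4123 {n : ℕ} (π : Equiv.Perm (Fin n)) (i j k l : Fin n)
    (hij : i < j) (hjk : j < k) (hkl : k < l)
    (h1 : (π j : ℕ) < π k) (h2 : (π k : ℕ) < π l) (h3 : (π l : ℕ) < π i) :
    Contains π ![4,1,2,3] := by
  refine ⟨![i,j,k,l], mk4mono i j k l hij hjk hkl, ?_⟩
  intro x y
  fin_cases x <;> fin_cases y <;>
    simp only [Fin.mk_zero, Fin.mk_one, fin4_mk2, fin4_mk3, Fin.lt_def, Matrix.cons_val_zero,
      Matrix.cons_val_one, Matrix.head_cons, Matrix.cons_val_two, Matrix.tail_cons,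
      Matrix.cons_val_three, Fin.isValue] <;> omega

/-! ### The permutation as a function on ℕ -/

noncomputable def Qf {n : ℕ} (π : Equiv.Perm (Fin n)) (i : ℕ) : ℕ :=
  if h : i < n then (π ⟨i, h⟩ : ℕ) else i

lemma Qf_eq {n : ℕ} (π : Equiv.Perm (Fin n)) {i : ℕ} (h : i < n) :
    Qf π i = (π ⟨i, h⟩ : ℕ) := dif_pos h

lemma Qf_lt {n : ℕ} (π : Equiv.Perm (Fin n)) {i : ℕ} (h : i < n) : Qf π i < n := by
  rw [Qf_eq π h]; exact (π ⟨i, h⟩).2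

lemma Qf_inj {n : ℕ} (π : Equiv.Perm (Fin n)) {i j : ℕ} (h : Qf π i = Qf π j) : i = j := by
  unfold Qf at h
  split_ifs at h with hi hj hj
  · have := π.injective (Fin.ext h : π ⟨i, hi⟩ = π ⟨j, hj⟩)
    exact congrArg Fin.val this
  · have : (π ⟨i, hi⟩ : ℕ) < n := (π ⟨i, hi⟩).2
    omega
  · have : (π ⟨j, hj⟩ : ℕ) < n := (π ⟨j, hj⟩).2
    omega
  · exact h

lemma Qf_surj {n : ℕ} (π : Equiv.Perm (Fin n)) {v : ℕ} (hv : v < n) :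
    ∃ i, i < n ∧ Qf π i = v := by
  refine ⟨(π.symm ⟨v, hv⟩ : ℕ), (π.symm ⟨v, hv⟩).2, ?_⟩
  rw [Qf_eq π (π.symm ⟨v, hv⟩).2]
  have : (⟨(π.symm ⟨v, hv⟩ : ℕ), (π.symm ⟨v, hv⟩).2⟩ : Fin n) = π.symm ⟨v, hv⟩ := Fin.eta _ _
  rw [this, Equiv.apply_symm_apply]

/-! ### Conditions translated to Qf -/

lemma kF {n : ℕ} {π : Equiv.Perm (Fin n)} (hF : IsFishburn π) :
    ∀ i j, i + 1 < j → j < n → Qf π i < Qf π (i+1) → Qf π j < Qf π i →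
      Qf π i = Qf π j + 1 → False := by
  intro i j h1 h2 h3 h4 h5
  apply hF
  refine ⟨i, j, h1, h2, ?_, ?_, ?_⟩
  · rw [Fin.lt_def, ← Qf_eq π (by omega : i < n), ← Qf_eq π (by omega : i + 1 < n)]
    exact h3
  · rw [Fin.lt_def, ← Qf_eq π h2, ← Qf_eq π (by omega : i < n)]
    exact h4
  · rw [← Qf_eq π (by omega : i < n), ← Qf_eq π h2]
    exact h5

lemma k321 {n : ℕ} {π : Equiv.Perm (Fin n)} (h : Avoids π ![3,2,1]) :
    ∀ i j k, i < j → j < k → k < n → Qf π j < Qf π i → Qf π k < Qf π j → False := by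
  intro i j k h1 h2 h3 h4 h5
  refine h (mk321 π ⟨i, by omega⟩ ⟨j, by omega⟩ ⟨k, h3⟩ ?_ ?_ ?_ ?_)
  · exact Fin.mk_lt_mk.mpr h1
  · exact Fin.mk_lt_mk.mpr h2
  · rw [← Qf_eq π (by omega : j < n), ← Qf_eq π (by omega : i < n)]; exact h4
  · rw [← Qf_eq π h3, ← Qf_eq π (by omega : j < n)]; exact h5

lemma k2143 {n : ℕ} {π : Equiv.Perm (Fin n)} (h : Avoids π ![2,1,4,3]) :
    ∀ i j k l, i < j → j < k → k < l → l < n →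
      Qf π j < Qf π i → Qf π i < Qf π l → Qf π l < Qf π k → False := by
  intro i j k l h1 h2 h3 h4 e1 e2 e3
  refine h (mk2143 π ⟨i, by omega⟩ ⟨j, by omega⟩ ⟨k, by omega⟩ ⟨l, h4⟩
    (Fin.mk_lt_mk.mpr h1) (Fin.mk_lt_mk.mpr h2) (Fin.mk_lt_mk.mpr h3) ?_ ?_ ?_)
  · rw [← Qf_eq π (by omega : j < n), ← Qf_eq π (by omega : i < n)]; exact e1
  · rw [← Qf_eq π (by omega : i < n), ← Qf_eq π h4]; exact e2
  · rw [← Qf_eq π h4, ← Qf_eq π (by omega : k < n)]; exact e3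

lemma k4123 {n : ℕ} {π : Equiv.Perm (Fin n)} (h : Avoids π ![4,1,2,3]) :
    ∀ i j k l, i < j → j < k → k < l → l < n →
      Qf π j < Qf π k → Qf π k < Qf π l → Qf π l < Qf π i → False := by
  intro i j k l h1 h2 h3 h4 e1 e2 e3
  refine h (mk4123 π ⟨i, by omega⟩ ⟨j, by omega⟩ ⟨k, by omega⟩ ⟨l, h4⟩
    (Fin.mk_lt_mk.mpr h1) (Fin.mk_lt_mk.mpr h2) (Fin.mk_lt_mk.mpr h3) ?_ ?_ ?_)
  · rw [← Qf_eq π (by omega : j < n), ← Qf_eq π (by omega : k < n)]; exact e1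
  · rw [← Qf_eq π (by omega : k < n), ← Qf_eq π h4]; exact e2
  · rw [← Qf_eq π h4, ← Qf_eq π (by omega : i < n)]; exact e3

/-! ### Monotone interval helpers -/

lemma hup {n : ℕ} {π : Equiv.Perm (Fin n)} {m c : ℕ}
    (hbase : m < n → m + c ≤ Qf π m)
    (hmono : ∀ q s, m ≤ q → q < s → s < n → Qf π q < Qf π s) :
    ∀ i, m ≤ i → i < n → i + c ≤ Qf π i := by
  intro i him hin
  induction i, him using Nat.le_induction with
  | base => exact hbase hin
  | succ i hi ih =>
    have h1 : Qf π i < Qf π (i+1) := hmono i (i+1) hi (by omega) hin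
    have := ih (by omega)
    omega

lemma hdown_aux {n : ℕ} {π : Equiv.Perm (Fin n)} {m r c : ℕ}
    (hanchor : ∀ i, m ≤ i → i + 1 = r → Qf π i ≤ i + c)
    (hmono : ∀ q s, m ≤ q → q < s → s < r → Qf π q < Qf π s) :
    ∀ k i, m ≤ i → i < r → r - i ≤ k + 1 → Qf π i ≤ i + c := by
  intro k
  induction k with
  | zero =>
    intro i h1 h2 h3
    exact hanchor i h1 (by omega)
  | succ k ih =>
    intro i h1 h2 h3
    by_cases hc : i + 1 = r
    · exact hanchor i h1 hc
    · have h4 : Qf π i < Qf π (i+1) := hmono i (i+1) h1 (by omega) (by omega)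
      have := ih (i+1) (by omega) (by omega) (by omega)
      omega

/-! ### The forward structure theorem -/

lemma forward {n : ℕ} {π : Equiv.Perm (Fin n)} (hF : IsFishburn π)
    (h321 : Avoids π ![3,2,1]) (h2143 : Avoids π ![2,1,4,3]) (h4123 : Avoids π ![4,1,2,3])
    (hne : π ≠ 1) :
    ∃ a b, a < b ∧ b < n ∧ ∀ i, i < n → Qf π i = fval n a b i := by
  classical
  have hex : ∃ m, Qf π m ≠ m := by
    by_contra hall
    push_neg at hall
    apply hne
    apply Equiv.ext
    intro x
    have h1 := hall x.1
    rw [Qf_eq π x.2] at h1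
    rw [Fin.eta x x.2] at h1
    rw [Equiv.Perm.one_apply]
    exact Fin.ext h1
  set a := Nat.find hex with ha_def
  have haQ : Qf π a ≠ a := Nat.find_spec hex
  have hmin : ∀ m, m < a → Qf π m = m := fun m hm => not_not.mp (Nat.find_min hex hm)
  have han : a < n := by
    by_contra h
    exact haQ (dif_neg (by omega))
  have hlow : ∀ i, i < n → a ≤ Qf π i ∨ Qf π i = i := by
    intro i h2
    by_cases h1 : a ≤ i
    · left
      by_contra h
      push_neg at h
      have e1 := hmin (Qf π i) h
      have e2 := Qf_inj π e1
      omega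
    · right; exact hmin i (by omega)
  have hlow' : ∀ i, a ≤ i → i < n → a ≤ Qf π i := by
    intro i h1 h2
    rcases hlow i h2 with h | h
    · exact h
    · rw [h]; exact h1
  have hQa : a < Qf π a := lt_of_le_of_ne (hlow' a le_rfl han) (Ne.symm haQ)
  obtain ⟨p, hpn, hpa⟩ := Qf_surj π han
  have hpgta : a < p := by
    rcases lt_trichotomy p a with h | h | h
    · rw [hmin p h] at hpa; omega
    · subst h; omega
    · exact h
  have hpa1 : p = a + 1 := by
    by_contra hc
    have hp2 : a + 2 ≤ p := by omega
    have mid : ∀ q, a < q → q < p → Qf π a < Qf π q := by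
      intro q h1 h2
      have hq_n : q < n := by omega
      have h3 : a ≤ Qf π q := hlow' q (by omega) hq_n
      have h4 : Qf π q ≠ a := fun he => by
        have := Qf_inj π (he.trans hpa.symm); omega
      rcases lt_trichotomy (Qf π q) (Qf π a) with h5 | h5 | h5
      · exact (k321 h321 a q p h1 h2 hpn h5 (by omega)).elim
      · have := Qf_inj π h5; omega
      · exact h5
    have hA1 : Qf π a < Qf π (a+1) := mid (a+1) (by omega) (by omega)
    have hQan := Qf_lt π han
    obtain ⟨r, hrn, hrv⟩ := Qf_surj π (show Qf π a - 1 < n by omega)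
    have hra : a < r := by
      rcases lt_trichotomy r a with h | h | h
      · rw [hmin r h] at hrv; omega
      · subst h; omega
      · exact h
    have hrp : ¬ (r < p) := by
      intro h
      have := mid r hra h
      omega
    exact kF hF a r (by omega) hrn hA1 (by omega) (by omega)
  subst hpa1
  have hA : Qf π (a+1) = a := hpa
  have hv2 : Qf π a ≤ a + 2 := by
    by_contra hc
    push_neg at hc
    have hvn : Qf π a < n := Qf_lt π han
    obtain ⟨r1, hr1n, hr1v⟩ := Qf_surj π (show a+1 < n by omega)
    obtain ⟨r2, hr2n, hr2v⟩ := Qf_surj π (show a+2 < n by omega)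
    have e1 : a + 2 ≤ r1 := by
      by_contra h
      push_neg at h
      rcases (show r1 < a ∨ r1 = a ∨ r1 = a + 1 by omega) with h' | h' | h'
      · rw [hmin r1 h'] at hr1v; omega
      · subst h'; omega
      · subst h'; omega
    have e2 : a + 2 ≤ r2 := by
      by_contra h
      push_neg at h
      rcases (show r2 < a ∨ r2 = a ∨ r2 = a + 1 by omega) with h' | h' | h'
      · rw [hmin r2 h'] at hr2v; omega
      · subst h'; omega
      · subst h'; omega
    have e3 : r1 ≠ r2 := fun h => by rw [h] at hr1v; omega
    rcases lt_or_gt_of_ne e3 with h | h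
    · exact k4123 h4123 a (a+1) r1 r2 (by omega) (by omega) h hr2n
        (by omega) (by omega) (by omega)
    · exact k321 h321 a r2 r1 (by omega) h hr1n (by omega) (by omega)
  have hmono : ∀ q s, a+1 < q → q < s → s < n → Qf π a < Qf π q → Qf π a < Qf π s →
      Qf π q < Qf π s := by
    intro q s h1 h2 h3 h4 h5
    rcases lt_trichotomy (Qf π q) (Qf π s) with h | h | h
    · exact h
    · have := Qf_inj π h; omega
    · exact (k2143 h2143 a (a+1) q s (by omega) h1 h2 h3 (by omega) h5 h).elim
  rcases (show Qf π a = a + 1 ∨ Qf π a = a + 2 by omega) with hv | hv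
  · -- adjacent transposition case
    refine ⟨a, a+1, by omega, by omega, ?_⟩
    have hbig : ∀ i, a+1 < i → i < n → a+2 ≤ Qf π i := by
      intro i h1 h2
      have h3 := hlow' i (by omega) h2
      have h4 : Qf π i ≠ a := fun he => by
        have := Qf_inj π (he.trans hA.symm); omega
      have h5 : Qf π i ≠ a+1 := fun he => by
        have := Qf_inj π (he.trans hv.symm); omega
      omega
    have hmono' : ∀ q s, a+2 ≤ q → q < s → s < n → Qf π q < Qf π s := by
      intro q s h1 h2 h3
      exact hmono q s (by omega) h2 h3
        (by have := hbig q (by omega) (by omega); omega)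
        (by have := hbig s (by omega) h3; omega)
    have hge : ∀ i, a+2 ≤ i → i < n → i + 0 ≤ Qf π i :=
      hup (fun h => by have := hbig (a+2) (by omega) h; omega) hmono'
    have hle : ∀ i, a+2 ≤ i → i < n → Qf π i ≤ i + 0 := by
      intro i h1 h2
      refine hdown_aux (r := n) (c := 0) ?_ ?_ n i h1 h2 (by omega)
      · intro i' h1' h2'
        have := Qf_lt π (show i' < n by omega)
        omega
      · intro q s hq hqs hs
        exact hmono' q s hq hqs hs
    intro i hin
    have spec := fval_spec n a (a+1) i
    rcases (show i < a ∨ i = a ∨ i = a + 1 ∨ a + 2 ≤ i by omega) with h | h | h | h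
    · have := hmin i h; omega
    · subst h; omega
    · subst h; omega
    · have e1 := hge i h hin
      have e2 := hle i h hin
      omega
  · -- the long cycle case
    have hvn : Qf π a < n := Qf_lt π han
    obtain ⟨r, hrn, hrv⟩ := Qf_surj π (show a+1 < n by omega)
    have hr2 : a + 2 ≤ r := by
      by_contra h
      push_neg at h
      rcases (show r < a ∨ r = a ∨ r = a + 1 by omega) with h' | h' | h'
      · rw [hmin r h'] at hrv; omega
      · subst h'; omega
      · subst h'; omega
    refine ⟨a, r, by omega, hrn, ?_⟩
    have hbig : ∀ i, a+1 < i → i < n → i ≠ r → a+3 ≤ Qf π i := by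
      intro i h1 h2 h3
      have h0 := hlow' i (by omega) h2
      have h4 : Qf π i ≠ a := fun he => by
        have := Qf_inj π (he.trans hA.symm); omega
      have h5 : Qf π i ≠ a+1 := fun he => by
        have := Qf_inj π (he.trans hrv.symm); omega
      have h6 : Qf π i ≠ a+2 := fun he => by
        have := Qf_inj π (he.trans hv.symm); omega
      omega
    have hmono' : ∀ q s, a+2 ≤ q → q < s → s < n → q ≠ r → s ≠ r → Qf π q < Qf π s := by
      intro q s h1 h2 h3 h4 h5
      exact hmono q s (by omega) h2 h3
        (by have := hbig q (by omega) (by omega) h4; omega)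
        (by have := hbig s (by omega) h3 h5; omega)
    have hC1up : ∀ i, a+2 ≤ i → i < r → i + 1 ≤ Qf π i := by
      intro i h1
      induction i, h1 using Nat.le_induction with
      | base =>
        intro h2
        have := hbig (a+2) (by omega) (by omega) (by omega)
        omega
      | succ i hi ih =>
        intro h2
        have e1 := ih (by omega)
        have e2 := hmono' i (i+1) hi (by omega) (by omega) (by omega) (by omega)
        omega
    have hC2down : ∀ i, r+1 ≤ i → i < n → Qf π i ≤ i + 0 := by
      intro i h1 h2
      refine hdown_aux (r := n) (c := 0) ?_ ?_ n i h1 h2 (by omega)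
      · intro i' h1' h2'
        have := Qf_lt π (show i' < n by omega)
        omega
      · intro q s hq hqs hs
        exact hmono' q s (by omega) hqs hs (by omega) (by omega)
    have hC2up : ∀ i, r+1 ≤ i → i < n → i + 0 ≤ Qf π i := by
      refine hup ?_ (fun q s hq hqs hs => hmono' q s (by omega) hqs hs (by omega) (by omega))
      intro h
      by_contra hcon
      push_neg at hcon
      have h3 := hbig (r+1) (by omega) h (by omega)
      have h4 := hC1up (Qf π (r+1) - 1) (by omega) (by omega)
      have h5 : Qf π (Qf π (r+1) - 1) ≠ Qf π (r+1) := fun he => by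
        have := Qf_inj π he; omega
      have h6 := hmono' (Qf π (r+1) - 1) (r+1) (by omega) (by omega) h (by omega) (by omega)
      omega
    have hC1down : ∀ i, a+2 ≤ i → i < r → Qf π i ≤ i + 1 := by
      intro i h1 h2
      refine hdown_aux (r := r) (c := 1) ?_ ?_ r i h1 h2 (by omega)
      · intro i' h1' h2'
        by_cases hc : r + 1 < n
        · have e1 := hC2down (r+1) (by omega) hc
          have e2 := hmono' i' (r+1) (by omega) (by omega) hc (by omega) (by omega)
          omega
        · have := Qf_lt π (show i' < n by omega)
          omega
      · intro q s hq hqs hs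
        exact hmono' q s hq hqs (by omega) (by omega) (by omega)
    intro i hin
    have spec := fval_spec n a r i
    rcases (show i < a ∨ i = a ∨ i = a + 1 ∨ (a + 2 ≤ i ∧ i < r) ∨ i = r ∨ r < i by omega)
      with h | h | h | h | h | h
    · have := hmin i h; omega
    · subst h; omega
    · subst h; omega
    · have e1 := hC1up i h.1 h.2
      have e2 := hC1down i h.1 h.2
      omega
    · subst h; omega
    · have e1 := hC2up i (by omega) hin
      have e2 := hC2down i (by omega) hin
      omega

/-! ### Assembly -/

lemma eq_sig_of_Qf {n : ℕ} (π : Equiv.Perm (Fin n)) (a b : ℕ)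
    (h : ∀ i, i < n → Qf π i = fval n a b i) : π = sig n a b := by
  apply Equiv.ext
  intro x
  apply Fin.ext
  rw [sig_apply, ← h x.1 x.2, Qf_eq π x.2, Fin.eta]

lemma one_eq_sig {n : ℕ} : (1 : Equiv.Perm (Fin n)) = sig n 0 0 := by
  apply Equiv.ext
  intro x
  apply Fin.ext
  rw [sig_apply]
  have : fval n 0 0 x.1 = x.1 := by unfold fval; rw [if_neg (by omega)]
  rw [this, Equiv.Perm.one_apply]

lemma mem_iff {n : ℕ} (π : Equiv.Perm (Fin n)) :
    (IsFishburn π ∧ Avoids π ![3,2,1] ∧ Avoids π ![2,1,4,3] ∧ Avoids π ![4,1,2,3]) ↔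
      (π = 1 ∨ ∃ a b, a < b ∧ b < n ∧ π = sig n a b) := by
  constructor
  · rintro ⟨h1, h2, h3, h4⟩
    by_cases hne : π = 1
    · exact Or.inl hne
    · obtain ⟨a, b, hab, hbn, hq⟩ := forward h1 h2 h3 h4 hne
      exact Or.inr ⟨a, b, hab, hbn, eq_sig_of_Qf π a b hq⟩
  · rintro (rfl | ⟨a, b, _, _, rfl⟩)
    · rw [one_eq_sig]
      exact ⟨sig_fishburn n 0 0, sig_av321 n 0 0, sig_av2143 n 0 0, sig_av4123 n 0 0⟩
    · exact ⟨sig_fishburn n a b, sig_av321 n a b, sig_av2143 n a b, sig_av4123 n a b⟩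

noncomputable def Tset (n : ℕ) : Finset (Equiv.Perm (Fin n)) :=
  insert 1 (((Finset.range n).sigma fun b => Finset.range b).image fun p => sig n p.2 p.1)

lemma mem_Tset {n : ℕ} (π : Equiv.Perm (Fin n)) :
    π ∈ Tset n ↔ (π = 1 ∨ ∃ a b, a < b ∧ b < n ∧ π = sig n a b) := by
  unfold Tset
  rw [Finset.mem_insert, Finset.mem_image]
  constructor
  · rintro (h | ⟨⟨b, a⟩, hmem, rfl⟩)
    · exact Or.inl h
    · rw [Finset.mem_sigma, Finset.mem_range, Finset.mem_range] at hmem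
      exact Or.inr ⟨a, b, hmem.2, hmem.1, rfl⟩
  · rintro (h | ⟨a, b, hab, hbn, rfl⟩)
    · exact Or.inl h
    · refine Or.inr ⟨⟨b, a⟩, ?_, rfl⟩
      rw [Finset.mem_sigma, Finset.mem_range, Finset.mem_range]
      exact ⟨hbn, hab⟩

lemma sig_pt {n a b a' b' : ℕ} (h : sig n a b = sig n a' b') :
    ∀ i, i < n → fval n a b i = fval n a' b' i := by
  intro i hi
  have := congrArg (fun e : Equiv.Perm (Fin n) => ((e ⟨i, hi⟩ : Fin n) : ℕ)) h
  exact this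

lemma card_Tset (n : ℕ) : (Tset n).card = n.choose 2 + 1 := by
  unfold Tset
  rw [Finset.card_insert_of_notMem, Finset.card_image_of_injOn, Finset.card_sigma]
  · have h1 := Finset.sum_range_id_mul_two n
    have h2 : n.choose 2 = n * (n - 1) / 2 := Nat.choose_two_right n
    simp only [Finset.card_range]
    omega
  · rintro ⟨b, a⟩ hp ⟨b', a'⟩ hq heq
    rw [Finset.mem_coe, Finset.mem_sigma, Finset.mem_range, Finset.mem_range] at hp hq
    have hp' : b < n ∧ a < b := hp
    have hq' : b' < n ∧ a' < b' := hq
    clear hp hq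
    obtain ⟨hp1, hp2⟩ := hp'
    obtain ⟨hq1, hq2⟩ := hq'
    have heq' : sig n a b = sig n a' b' := heq
    have hpt := sig_pt heq'
    have e1 := hpt a (by omega)
    have e2 := hpt a' (by omega)
    have e3 := hpt b (by omega)
    have e4 := hpt b' (by omega)
    have s1 := fval_spec n a b a
    have s2 := fval_spec n a' b' a
    have s3 := fval_spec n a b a'
    have s4 := fval_spec n a' b' a'
    have s5 := fval_spec n a b b
    have s6 := fval_spec n a' b' b
    have s7 := fval_spec n a b b'
    have s8 := fval_spec n a' b' b'
    have : b = b' ∧ a = a' := by omega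
    obtain ⟨rfl, rfl⟩ := this
    rfl
  · intro hmem
    rw [Finset.mem_image] at hmem
    obtain ⟨⟨b, a⟩, hmem, heq⟩ := hmem
    rw [Finset.mem_sigma, Finset.mem_range, Finset.mem_range] at hmem
    have hmem' : b < n ∧ a < b := hmem
    clear hmem
    obtain ⟨hm1, hm2⟩ := hmem'
    have heq' : sig n a b = 1 := heq
    have := congrArg (fun e : Equiv.Perm (Fin n) =>
      ((e ⟨a+1, by omega⟩ : Fin n) : ℕ)) heq'
    simp only [Equiv.Perm.one_apply] at this
    have hval : fval n a b (a+1) = a + 1 := this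
    have s := fval_spec n a b (a+1)
    omega

end FishburnAux

open FishburnAux in
theorem fishburn_321_2143_4123 (n : ℕ) :
    {π : Equiv.Perm (Fin n) | IsFishburn π ∧ Avoids π ![3, 2, 1] ∧ Avoids π ![2, 1, 4, 3] ∧ Avoids π ![4, 1, 2, 3]}.ncard = n.choose 2 + 1 := by
  have hset : {π : Equiv.Perm (Fin n) | IsFishburn π ∧ Avoids π ![3, 2, 1] ∧
      Avoids π ![2, 1, 4, 3] ∧ Avoids π ![4, 1, 2, 3]} = ↑(Tset n) := by
    ext π
    rw [Set.mem_setOf_eq, Finset.mem_coe, mem_Tset, mem_iff]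
  rw [hset, Set.ncard_coe_finset, card_Tset]
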